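/- Let T ≥ 1 be a natural number. Every complex root z of the polynomial 1 + 2((1+T)^2/(1+2T))·sin(π/(2+2T))·z^T + z^{2T} satisfies |z| = 1. Consequently, all zeros of the derivative of the trinomial S^{(T)}(z) = z + (2(1+T)/(1+2T))·sin(π/(2+2T))·z^{T+1} + (1/(1+2T))·z^{2T+1} lie on the unit circle. -/

import Mathlib

open Real

/-- The extremal T-fold symmetric trinomial
S^{(T)}(z) = z + (2(1+T)/(1+2T))·sin(π/(2+2T))·z^{T+1} + (1/(1+2T))·z^{2T+1}. -/
noncomputable def suffridgeTrinomial (T : ℕ) (z : ℂ) : ℂ :=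
  z + ((2 * (1 + (T:ℝ)) / (1 + 2*(T:ℝ)) * Real.sin (π / (2 + 2*(T:ℝ))) : ℝ) : ℂ) * z^(T+1)
    + ((1 / (1 + 2*(T:ℝ)) : ℝ) : ℂ) * z^(2*T+1)

/-- A monic real quadratic with constant term 1 and middle coefficient in (0,2)
has both roots on the unit circle. -/
lemma quad_abs_aux (c : ℝ) (hc0 : 0 < c) (hc2 : c < 2) (w : ℂ)
    (h : w^2 + (c:ℂ)*w + 1 = 0) : ‖w‖ = 1 := by
  have hre := congrArg Complex.re h
  have him := congrArg Complex.im h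
  simp [pow_two, Complex.add_re, Complex.add_im, Complex.mul_re, Complex.mul_im] at hre him
  have hsq : w.re^2 + w.im^2 = 1 := by
    rcases em (w.im = 0) with hy | hy
    · exfalso; rw [hy] at hre; nlinarith [sq_nonneg (w.re + c/2)]
    · have hx : 2*w.re + c = 0 := by
        have h' : (2*w.re + c) * w.im = 0 := by nlinarith [him]
        rcases mul_eq_zero.mp h' with h''|h''
        · exact h''
        · exact absurd h'' hy
      nlinarith [hre]
  have h2 : ‖w‖ ^ 2 = 1 := by
    rw [Complex.sq_norm, Complex.normSq_apply]; nlinarith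
  nlinarith [norm_nonneg w]

lemma coef_bounds_aux (T : ℕ) (hT : 1 ≤ T) :
    0 < 2 * ((1 + (T:ℝ))^2 / (1 + 2*(T:ℝ))) * Real.sin (π / (2 + 2*(T:ℝ))) ∧
    2 * ((1 + (T:ℝ))^2 / (1 + 2*(T:ℝ))) * Real.sin (π / (2 + 2*(T:ℝ))) < 2 := by
  set t : ℝ := (T:ℝ) with ht
  have ht1 : (1:ℝ) ≤ t := by rw [ht]; exact_mod_cast hT
  have hden : (0:ℝ) < 1 + 2*t := by linarith
  have hden2 : (0:ℝ) < 2 + 2*t := by linarith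
  have hargpos : 0 < π / (2 + 2*t) := div_pos pi_pos hden2
  have harglt : π / (2 + 2*t) < π := by
    rw [div_lt_iff₀ hden2]; nlinarith [pi_pos]
  have hs : 0 < Real.sin (π / (2 + 2*t)) := Real.sin_pos_of_pos_of_lt_pi hargpos harglt
  constructor
  · have : (0:ℝ) < (1+t)^2 / (1+2*t) := div_pos (by nlinarith) hden
    nlinarith
  · rcases eq_or_lt_of_le ht1 with h1 | h1
    · -- T = 1
      have : π / (2 + 2*t) = π / 4 := by rw [← h1]; norm_num
      rw [this, Real.sin_pi_div_four, ← h1]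
      have h2 : Real.sqrt 2 < 3/2 := by
        nlinarith [Real.sq_sqrt (by norm_num : (0:ℝ) ≤ 2), Real.sqrt_nonneg 2]
      norm_num
      nlinarith
    · -- T ≥ 2
      have ht2 : (2:ℝ) ≤ t := by
        have hn : 1 < T := by rw [ht] at h1; exact_mod_cast h1
        have : 2 ≤ T := by omega
        rw [ht]; exact_mod_cast this
      have hlt : Real.sin (π / (2 + 2*t)) < π / (2 + 2*t) := Real.sin_lt hargpos
      have hpi : π < 3.15 := pi_lt_d2
      have key : Real.sin (π / (2 + 2*t)) < 3.15 / (2 + 2*t) := by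
        have h315 : π / (2+2*t) < 3.15 / (2+2*t) := by gcongr
        linarith
      have hcoef : 2 * ((1+t)^2 / (1+2*t)) * Real.sin (π / (2 + 2*t))
          < 2 * ((1+t)^2 / (1+2*t)) * (3.15 / (2 + 2*t)) := by
        apply mul_lt_mul_of_pos_left key
        positivity
      calc 2 * ((1+t)^2 / (1+2*t)) * Real.sin (π / (2 + 2*t))
          < 2 * ((1+t)^2 / (1+2*t)) * (3.15 / (2 + 2*t)) := hcoef
        _ ≤ 2 := by
            have heq : 2 * ((1+t)^2 / (1+2*t)) * (3.15 / (2 + 2*t))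
                = (2*(1+t)^2*3.15) / ((1+2*t)*(2+2*t)) := by field_simp
            rw [heq, div_le_iff₀ (by positivity)]
            nlinarith

lemma suffridge_deriv_aux (T : ℕ) (z : ℂ) :
    deriv (suffridgeTrinomial T) z
      = 1 + (((T:ℂ)+1) * ((2 * (1 + (T:ℝ)) / (1 + 2*(T:ℝ)) * Real.sin (π / (2 + 2*(T:ℝ))) : ℝ) : ℂ)) * z^T
        + ((2*(T:ℂ)+1) * ((1 / (1 + 2*(T:ℝ)) : ℝ) : ℂ)) * z^(2*T) := by
  have h : HasDerivAt (suffridgeTrinomial T)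
      (1 + (((T:ℂ)+1) * ((2 * (1 + (T:ℝ)) / (1 + 2*(T:ℝ)) * Real.sin (π / (2 + 2*(T:ℝ))) : ℝ) : ℂ)) * z^T
        + ((2*(T:ℂ)+1) * ((1 / (1 + 2*(T:ℝ)) : ℝ) : ℂ)) * z^(2*T)) z := by
    have h1 := (hasDerivAt_pow (T+1) z).const_mul
      ((2 * (1 + (T:ℝ)) / (1 + 2*(T:ℝ)) * Real.sin (π / (2 + 2*(T:ℝ))) : ℝ) : ℂ)
    have h2 := (hasDerivAt_pow (2*T+1) z).const_mul ((1 / (1 + 2*(T:ℝ)) : ℝ) : ℂ)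
    have h0 := hasDerivAt_id z
    have := (h0.add h1).add h2
    convert this using 1
    · rfl
    · rfl
    · rfl
    simp [Nat.add_sub_cancel]
    ring
  exact h.deriv

theorem suffridgeTrinomial_deriv_zeros_on_circle (T : ℕ) (hT : 1 ≤ T) :
    (∀ z : ℂ,
      1 + ((2 * ((1 + (T:ℝ))^2 / (1 + 2*(T:ℝ))) * Real.sin (π / (2 + 2*(T:ℝ))) : ℝ) : ℂ) * z^T
        + z^(2*T) = 0 → ‖z‖ = 1) ∧
    (∀ z : ℂ, deriv (suffridgeTrinomial T) z = 0 → ‖z‖ = 1) := by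
  obtain ⟨hc0, hc2⟩ := coef_bounds_aux T hT
  have part1 : ∀ z : ℂ,
      1 + ((2 * ((1 + (T:ℝ))^2 / (1 + 2*(T:ℝ))) * Real.sin (π / (2 + 2*(T:ℝ))) : ℝ) : ℂ) * z^T
        + z^(2*T) = 0 → ‖z‖ = 1 := by
    intro z hz
    rw [mul_comm 2 T, pow_mul] at hz
    have hw : (z^T)^2 + ((2 * ((1 + (T:ℝ))^2 / (1 + 2*(T:ℝ))) * Real.sin (π / (2 + 2*(T:ℝ))) : ℝ) : ℂ) * (z^T) + 1 = 0 := by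
      linear_combination hz
    have habs : ‖z^T‖ = 1 := quad_abs_aux _ hc0 hc2 _ hw
    rw [norm_pow] at habs
    rcases lt_trichotomy ‖z‖ 1 with h | h | h
    · exfalso
      have := pow_lt_one₀ (norm_nonneg z) h (by omega : T ≠ 0)
      rw [habs] at this; exact lt_irrefl 1 this
    · exact h
    · exfalso
      have := one_lt_pow₀ h (by omega : T ≠ 0)
      rw [habs] at this; exact lt_irrefl 1 this
  refine ⟨part1, ?_⟩
  intro z hz
  rw [suffridge_deriv_aux] at hz
  apply part1 z
  have hne : (1 + 2*(T:ℝ)) ≠ 0 := by positivity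
  have hneC : (1:ℂ) + 2*(T:ℂ) ≠ 0 := by exact_mod_cast Complex.ofReal_ne_zero.mpr hne
  have e1 : (((T:ℂ)+1) * ((2 * (1 + (T:ℝ)) / (1 + 2*(T:ℝ)) * Real.sin (π / (2 + 2*(T:ℝ))) : ℝ) : ℂ))
      = ((2 * ((1 + (T:ℝ))^2 / (1 + 2*(T:ℝ))) * Real.sin (π / (2 + 2*(T:ℝ))) : ℝ) : ℂ) := by
    push_cast
    field_simp
    ring
  have e2 : ((2*(T:ℂ)+1) * ((1 / (1 + 2*(T:ℝ)) : ℝ) : ℂ)) = 1 := by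
    push_cast
    field_simp
    ring
  rw [e1, e2] at hz
  rw [← hz]
  ring
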